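/- Let G be a group and C a class of groups. The following are equivalent: (1) G is approximable by C; (2) G embeds into an ultraproduct of members of C (i.e. there exist an index set I, an ultrafilter U on I and groups C_i in C such that G embeds into the ultraproduct of the C_i with respect to U); (3) G satisfies every universal first-order sentence in the language of groups that is true in all members of C; (4) every finitely generated subgroup of G is approximable by C. -/

import Mathlib

open FirstOrder

/-- The first-order language of groups: one constant (the identity), one unary function
symbol (inversion), one binary function symbol (multiplication) and no relation symbols. -/
def GroupLang : FirstOrder.Language where
  Functions := fun n =>
    match n with
    | 0 => Unit
    | 1 => Unit
    | 2 => Unit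
    | _ => Empty
  Relations := fun _ => Empty

/-- Every group is a structure for the language of groups in the natural way. -/
instance groupLangStructure (G : Type*) [Group G] : GroupLang.Structure G where
  funMap := fun {n} f x =>
    match n, f, x with
    | 0, _, _ => 1
    | 1, _, x => (x 0)⁻¹
    | 2, _, x => x 0 * x 1
  RelMap := fun {n} r _ => r.elim

/-- The setoid on the product of a family of types given by eventual equality along an
ultrafilter. -/
def uprodSetoid {ι : Type*} (𝒰 : Ultrafilter ι) (G : ι → Type*) : Setoid (∀ i, G i) where
  r f g := ∀ᶠ i in (𝒰 : Filter ι), f i = g i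
  iseqv :=
    ⟨fun _ => Filter.Eventually.of_forall fun _ => rfl,
     fun h => h.mono fun _ hi => hi.symm,
     fun h₁ h₂ => h₂.mp (h₁.mono fun _ hi hi' => hi.trans hi')⟩

theorem uprodSetoid_ev {ι : Type*} {𝒰 : Ultrafilter ι} {G : ι → Type*} {f g : ∀ i, G i}
    (h : (uprodSetoid 𝒰 G).r f g) : ∀ᶠ i in (𝒰 : Filter ι), f i = g i := h

/-- The ultraproduct of a family of types with respect to an ultrafilter. -/
def UProd {ι : Type*} (𝒰 : Ultrafilter ι) (G : ι → Type*) : Type _ :=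
  Quotient (uprodSetoid 𝒰 G)

/-- The class of an element of the product in the ultraproduct. -/
def UProd.mk {ι : Type*} (𝒰 : Ultrafilter ι) (G : ι → Type*) (f : ∀ i, G i) :
    UProd 𝒰 G :=
  Quotient.mk (uprodSetoid 𝒰 G) f

/-- An ultraproduct of groups is a group, with coordinatewise operations. -/
instance UProd.instGroup {ι : Type*} (𝒰 : Ultrafilter ι) (G : ι → Type*)
    [∀ i, Group (G i)] : Group (UProd 𝒰 G) where
  mul := Quotient.map₂ (fun f g i => f i * g i)
    (fun f f' h₁ g g' h₂ => (uprodSetoid_ev h₂).mp ((uprodSetoid_ev h₁).mono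
      fun i e₁ e₂ => show f i * g i = f' i * g' i by rw [e₁, e₂]))
  one := UProd.mk 𝒰 G fun _ => 1
  inv := Quotient.map (fun f i => (f i)⁻¹)
    (fun f f' h => (uprodSetoid_ev h).mono fun i e => show (f i)⁻¹ = (f' i)⁻¹ by rw [e])
  mul_assoc := by
    rintro ⟨f⟩ ⟨g⟩ ⟨h⟩
    exact Quotient.sound (Filter.Eventually.of_forall fun i => mul_assoc _ _ _)
  one_mul := by
    rintro ⟨f⟩
    exact Quotient.sound (Filter.Eventually.of_forall fun i => one_mul _)
  mul_one := by
    rintro ⟨f⟩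
    exact Quotient.sound (Filter.Eventually.of_forall fun i => mul_one _)
  inv_mul_cancel := by
    rintro ⟨f⟩
    exact Quotient.sound (Filter.Eventually.of_forall fun i => inv_mul_cancel _)

/-- A group `G` is approximable by a class `C` of groups if for every finite subset `F` of
`G` there is a member `H` of `C` and a map `ξ : G → H`, injective on `F`, preserving all
products which stay inside `F`. -/
def Approximable (G : Type*) [Group G] (C : GrpCat.{u} → Prop) : Prop :=
  ∀ F : Finset G, ∃ H : GrpCat.{u}, C H ∧ ∃ ξ : G → ↥H,
    Set.InjOn ξ (F : Set G) ∧
      ∀ g ∈ F, ∀ h ∈ F, g * h ∈ F → ξ (g * h) = ξ g * ξ h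

universe u

section Aux

open FirstOrder Language Structure Filter

/-- The multiplication symbol of `GroupLang`. -/
def mulS : GroupLang.Functions 2 := ()

/-- The inversion symbol of `GroupLang`. -/
def invS : GroupLang.Functions 1 := ()

/-- The identity symbol of `GroupLang`. -/
def oneS : GroupLang.Functions 0 := ()

variable {ι : Type*} (𝒰 : Ultrafilter ι) (M : ι → Type*)

theorem UProdmk_mul [∀ i, Group (M i)] (f g : ∀ i, M i) :
    UProd.mk 𝒰 M f * UProd.mk 𝒰 M g = UProd.mk 𝒰 M fun i => f i * g i := rfl

/-- Identification of `UProd` with mathlib's `Filter.Product`. -/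
def toProd : UProd 𝒰 M → (𝒰 : Filter ι).Product M :=
  Quotient.lift (fun a => Quotient.mk ((𝒰 : Filter ι).productSetoid M) a)
    (fun _ _ h => Quotient.sound h)

theorem toProd_injective : Function.Injective (toProd 𝒰 M) := by
  rintro ⟨a⟩ ⟨b⟩ h
  exact Quotient.sound (Quotient.exact h)

variable [∀ i, Group (M i)]

theorem toProd_mk (f : ∀ i, M i) :
    toProd 𝒰 M (UProd.mk 𝒰 M f) = Quotient.mk ((𝒰 : Filter ι).productSetoid M) f := rfl

theorem toProd_mul (a b : UProd 𝒰 M) :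
    toProd 𝒰 M (a * b) = funMap mulS ![toProd 𝒰 M a, toProd 𝒰 M b] := by
  refine Quotient.inductionOn₂ a b fun fa fb => ?_
  have h1 : ![toProd 𝒰 M (UProd.mk 𝒰 M fa), toProd 𝒰 M (UProd.mk 𝒰 M fb)] =
      fun j => (Quotient.mk ((𝒰 : Filter ι).productSetoid M) (![fa, fb] j)) := by
    funext j
    fin_cases j <;> rfl
  show toProd 𝒰 M (UProd.mk 𝒰 M fa * UProd.mk 𝒰 M fb) =
    funMap mulS ![toProd 𝒰 M (UProd.mk 𝒰 M fa), toProd 𝒰 M (UProd.mk 𝒰 M fb)]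
  rw [h1]
  refine Eq.trans ?_ (funMap_quotient_mk' (L := GroupLang) (s := (𝒰 : Filter ι).productSetoid M) mulS ![fa, fb]).symm
  rfl

theorem toProd_inv (a : UProd 𝒰 M) :
    toProd 𝒰 M a⁻¹ = funMap invS ![toProd 𝒰 M a] := by
  refine Quotient.inductionOn a fun fa => ?_
  have h1 : ![toProd 𝒰 M (UProd.mk 𝒰 M fa)] =
      fun j => (Quotient.mk ((𝒰 : Filter ι).productSetoid M) (![fa] j)) := by
    funext j
    fin_cases j <;> rfl
  show toProd 𝒰 M (UProd.mk 𝒰 M fa)⁻¹ = funMap invS ![toProd 𝒰 M (UProd.mk 𝒰 M fa)]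
  rw [h1]
  refine Eq.trans ?_ (funMap_quotient_mk' (L := GroupLang) (s := (𝒰 : Filter ι).productSetoid M) invS ![fa]).symm
  rfl

theorem toProd_one (x : Fin 0 → (𝒰 : Filter ι).Product M) :
    toProd 𝒰 M 1 = funMap oneS x := by
  have h1 : x = fun j => (Quotient.mk ((𝒰 : Filter ι).productSetoid M)
      ((fun _ => fun i => (1 : M i)) j)) := by
    funext j
    exact j.elim0
  rw [h1]
  refine Eq.trans ?_ (funMap_quotient_mk' (L := GroupLang) (s := (𝒰 : Filter ι).productSetoid M) oneS (fun _ => fun i => (1 : M i))).symm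
  rfl

/-- An injective group homomorphism into `UProd` gives a first-order embedding into the
corresponding `Filter.Product`. -/
def grpEmbedding {G : Type*} [Group G] (f : G →* UProd 𝒰 M) (hf : Function.Injective f) :
    G ↪[GroupLang] (𝒰 : Filter ι).Product M where
  toFun := toProd 𝒰 M ∘ f
  inj' := (toProd_injective 𝒰 M).comp hf
  map_fun' := by
    intro n F x
    match n, F with
    | 0, _ =>
      show toProd 𝒰 M (f 1) = _
      rw [map_one]
      exact toProd_one 𝒰 M _
    | 1, _ =>
      show toProd 𝒰 M (f (x 0)⁻¹) = _
      rw [map_inv, toProd_inv]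
      congr 1
      funext j
      fin_cases j <;> rfl
    | 2, _ =>
      show toProd 𝒰 M (f (x 0 * x 1)) = _
      rw [map_mul, toProd_mul]
      congr 1
      funext j
      fin_cases j <;> rfl
  map_rel' := by
    intro n r x
    exact r.elim

theorem isQF_foldr_inf {L : Language} {α : Type*} {n : ℕ} (l : List (L.BoundedFormula α n))
    (h : ∀ φ ∈ l, φ.IsQF) : (l.foldr (· ⊓ ·) ⊤).IsQF := by
  induction l with
  | nil => exact BoundedFormula.IsQF.top
  | cons a l ih => exact (h a (by simp)).inf (ih fun φ hφ => h φ (by simp [hφ]))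

theorem isUniversal_alls {L : Language} {α : Type*} : ∀ {n : ℕ} (φ : L.BoundedFormula α n),
    φ.IsUniversal → φ.alls.IsUniversal
  | 0, φ, h => h
  | _ + 1, φ, h => isUniversal_alls φ.all h.all

end Aux



section Implications

open FirstOrder Language Structure Filter

theorem one_to_two {G : Type u} [Group G] {C : GrpCat.{u} → Prop} (h : Approximable G C) :
    ∃ (I : Type u) (𝒰 : Ultrafilter I) (H : I → GrpCat.{u}),
      (∀ i, C (H i)) ∧ ∃ f : G →* UProd 𝒰 fun i => ↥(H i), Function.Injective f := by
  classical
  choose H hCH ξ hinj hmul using h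
  haveI : Nonempty (Finset G) := ⟨∅⟩
  haveI : (atTop : Filter (Finset G)).NeBot := atTop_neBot
  set 𝒰 : Ultrafilter (Finset G) := Ultrafilter.of atTop with h𝒰
  have key : ∀ S : Finset G, ∀ᶠ F in (𝒰 : Filter (Finset G)), S ⊆ F := fun S =>
    Ultrafilter.of_le atTop (mem_atTop S)
  refine ⟨Finset G, 𝒰, H, hCH, MonoidHom.mk' (fun g => UProd.mk 𝒰 _ fun F => ξ F g) ?_, ?_⟩
  · intro a b
    rw [UProdmk_mul]
    exact Quotient.sound ((key {a, b, a * b}).mono fun F hF =>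
      hmul F a (hF (by simp)) b (hF (by simp)) (hF (by simp)))
  · intro a b hab
    have h1 : ∀ᶠ F in (𝒰 : Filter (Finset G)), ξ F a = ξ F b := Quotient.exact hab
    obtain ⟨F, hFe, hFs⟩ := (h1.and (key {a, b})).exists
    exact hinj F (Finset.mem_coe.mpr (hFs (by simp))) (Finset.mem_coe.mpr (hFs (by simp))) hFe

theorem two_to_three {G : Type u} [Group G] {C : GrpCat.{u} → Prop}
    (h : ∃ (I : Type u) (𝒰 : Ultrafilter I) (H : I → GrpCat.{u}),
      (∀ i, C (H i)) ∧ ∃ f : G →* UProd 𝒰 fun i => ↥(H i), Function.Injective f)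
    (φ : GroupLang.Sentence) (hφ : φ.IsUniversal)
    (hall : ∀ H : GrpCat.{u}, C H → ↥H ⊨ φ) : G ⊨ φ := by
  obtain ⟨I, 𝒰, H, hCH, f, hf⟩ := h
  haveI : ∀ i, Nonempty ↥(H i) := fun i => ⟨1⟩
  have hprod : (𝒰 : Filter I).Product (fun i => ↥(H i)) ⊨ φ :=
    (Ultraproduct.sentence_realize φ).mpr (Filter.Eventually.of_forall fun i => hall _ (hCH i))
  have h0 : BoundedFormula.Realize (M := (𝒰 : Filter I).Product fun i => ↥(H i)) φ
      (⇑(grpEmbedding 𝒰 (fun i => ↥(H i)) f hf) ∘ (default : Empty → G))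
      (⇑(grpEmbedding 𝒰 (fun i => ↥(H i)) f hf) ∘ (default : Fin 0 → G)) := by
    have h1 : BoundedFormula.Realize (M := (𝒰 : Filter I).Product fun i => ↥(H i)) φ
        default default := hprod
    convert h1 using 2 <;> exact Subsingleton.elim _ _
  exact hφ.realize_embedding (grpEmbedding 𝒰 (fun i => ↥(H i)) f hf) h0

theorem three_to_one {G : Type u} [Group G] {C : GrpCat.{u} → Prop}
    (h3 : ∀ φ : GroupLang.Sentence, φ.IsUniversal →
      (∀ H : GrpCat.{u}, C H → ↥H ⊨ φ) → G ⊨ φ) :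
    Approximable G C := by
  classical
  intro F
  set n := F.card with hn
  set e := F.equivFin with he
  set g : Fin n → G := fun i => ((e.symm i : ↥F) : G) with hg
  have hginj : Function.Injective g := by
    intro i j hij
    exact e.symm.injective (Subtype.coe_injective hij)
  let tm : Fin n → GroupLang.Term (Empty ⊕ Fin n) := fun i => Term.var (Sum.inr i)
  let l₁ : List (GroupLang.BoundedFormula Empty n) :=
    ((List.finRange n ×ˢ List.finRange n).filter fun p => p.1 ≠ p.2).map
      fun p => (Term.bdEqual (tm p.1) (tm p.2)).not
  let l₂ : List (GroupLang.BoundedFormula Empty n) :=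
    ((List.finRange n ×ˢ List.finRange n ×ˢ List.finRange n).filter
        fun p => g p.1 * g p.2.1 = g p.2.2).map
      fun p => Term.bdEqual (Term.func mulS ![tm p.1, tm p.2.1]) (tm p.2.2)
  let χ : GroupLang.BoundedFormula Empty n := (l₁ ++ l₂).foldr (· ⊓ ·) ⊤
  have hQF : ∀ φ ∈ l₁ ++ l₂, φ.IsQF := by
    intro φ hφ
    rcases List.mem_append.mp hφ with hφ | hφ <;> obtain ⟨p, hp, rfl⟩ := List.mem_map.mp hφ
    · exact (BoundedFormula.IsAtomic.equal _ _).isQF.not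
    · exact (BoundedFormula.IsAtomic.equal _ _).isQF
  have hψU : (χ.not.alls).IsUniversal := isUniversal_alls _ ((isQF_foldr_inf _ hQF).not).isUniversal
  have hGψ : ¬ (G ⊨ χ.not.alls) := by
    intro hsat
    have h' : χ.not.alls.Realize (default : Empty → G) := hsat
    rw [BoundedFormula.realize_alls] at h'
    have h'' := h' g
    rw [BoundedFormula.realize_not] at h''
    apply h''
    rw [BoundedFormula.realize_foldr_inf]
    intro φ hφ
    rcases List.mem_append.mp hφ with hφ | hφ
    · obtain ⟨p, hp, rfl⟩ := List.mem_map.mp hφ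
      have hne : p.1 ≠ p.2 := by simpa using (List.mem_filter.mp hp).2
      rw [BoundedFormula.realize_not, BoundedFormula.realize_bdEqual]
      exact fun hh => hne (hginj hh)
    · obtain ⟨p, hp, rfl⟩ := List.mem_map.mp hφ
      have hm : g p.1 * g p.2.1 = g p.2.2 := by simpa using (List.mem_filter.mp hp).2
      rw [BoundedFormula.realize_bdEqual]
      exact hm
  have hex : ∃ H : GrpCat.{u}, C H ∧ ¬ (↥H ⊨ χ.not.alls) := by
    by_contra hc
    push_neg at hc
    exact hGψ (h3 _ hψU hc)
  obtain ⟨H, hCH, hH⟩ := hex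
  have hH' : ¬ (χ.not.alls.Realize (default : Empty → ↥H)) := hH
  rw [BoundedFormula.realize_alls] at hH'
  push_neg at hH'
  obtain ⟨xs, hxs⟩ := hH'
  rw [BoundedFormula.realize_not, not_not, BoundedFormula.realize_foldr_inf] at hxs
  have hdist : ∀ i j : Fin n, i ≠ j → xs i ≠ xs j := by
    intro i j hij
    have hm : ((Term.bdEqual (tm i) (tm j)).not) ∈ l₁ ++ l₂ :=
      List.mem_append.mpr (Or.inl (List.mem_map.mpr ⟨(i, j),
        List.mem_filter.mpr ⟨by simp, by simpa using hij⟩, rfl⟩))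
    have hthis := hxs _ hm
    rw [BoundedFormula.realize_not, BoundedFormula.realize_bdEqual] at hthis
    exact hthis
  have hmulxs : ∀ i j k : Fin n, g i * g j = g k → xs i * xs j = xs k := by
    intro i j k hijk
    have hm : (Term.bdEqual (Term.func mulS ![tm i, tm j]) (tm k)) ∈ l₁ ++ l₂ :=
      List.mem_append.mpr (Or.inr (List.mem_map.mpr ⟨(i, j, k),
        List.mem_filter.mpr ⟨by simp, by simpa using hijk⟩, rfl⟩))
    have hthis := hxs _ hm
    rw [BoundedFormula.realize_bdEqual] at hthis
    exact hthis
  refine ⟨H, hCH, fun a => if h : a ∈ F then xs (e ⟨a, h⟩) else 1, ?_, ?_⟩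
  · intro a ha b hb hab
    rw [Finset.mem_coe] at ha hb
    dsimp only at hab
    rw [dif_pos ha, dif_pos hb] at hab
    by_contra hne
    exact hdist (e ⟨a, ha⟩) (e ⟨b, hb⟩)
      (fun hh => hne (congrArg Subtype.val (e.injective hh))) hab
  · intro a ha b hb hab
    dsimp only
    rw [dif_pos hab, dif_pos ha, dif_pos hb]
    refine (hmulxs (e ⟨a, ha⟩) (e ⟨b, hb⟩) (e ⟨a * b, hab⟩) ?_).symm
    simp [hg]

theorem one_to_four {G : Type u} [Group G] {C : GrpCat.{u} → Prop} (h : Approximable G C) :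
    ∀ L : Subgroup G, L.FG → Approximable (↥L) C := by
  classical
  intro L _ Fl
  obtain ⟨H, hCH, ξ, hinj, hmul⟩ := h (Fl.image (fun x : ↥L => (x : G)))
  refine ⟨H, hCH, fun x => ξ x, ?_, ?_⟩
  · intro a ha b hb hab
    rw [Finset.mem_coe] at ha hb
    exact Subtype.ext (hinj (Finset.mem_coe.mpr (Finset.mem_image_of_mem _ ha))
      (Finset.mem_coe.mpr (Finset.mem_image_of_mem _ hb)) hab)
  · intro a ha b hb hab
    exact hmul ↑a (Finset.mem_image_of_mem _ ha) ↑b (Finset.mem_image_of_mem _ hb)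
      (Finset.mem_image_of_mem _ hab)

theorem four_to_one {G : Type u} [Group G] {C : GrpCat.{u} → Prop}
    (h : ∀ L : Subgroup G, L.FG → Approximable (↥L) C) : Approximable G C := by
  classical
  intro F
  set L : Subgroup G := Subgroup.closure ↑F with hL
  have hFG : L.FG := ⟨F, rfl⟩
  have hmem : ∀ a ∈ F, a ∈ L := fun a ha => Subgroup.subset_closure ha
  set F' : Finset ↥L := F.attach.image (fun x => (⟨x.1, hmem x.1 x.2⟩ : ↥L)) with hF'
  obtain ⟨H, hCH, ξ, hinj, hmul⟩ := h L hFG F'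
  have hmem' : ∀ (a : G) (ha : a ∈ F), (⟨a, hmem a ha⟩ : ↥L) ∈ F' := fun a ha =>
    Finset.mem_image.mpr ⟨⟨a, ha⟩, F.mem_attach _, rfl⟩
  refine ⟨H, hCH, fun a => if h : a ∈ L then ξ ⟨a, h⟩ else 1, ?_, ?_⟩
  · intro a ha b hb hab
    rw [Finset.mem_coe] at ha hb
    dsimp only at hab
    rw [dif_pos (hmem a ha), dif_pos (hmem b hb)] at hab
    exact congrArg Subtype.val (hinj (Finset.mem_coe.mpr (hmem' a ha))
      (Finset.mem_coe.mpr (hmem' b hb)) hab)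
  · intro a ha b hb hab
    dsimp only
    rw [dif_pos (hmem _ hab), dif_pos (hmem a ha), dif_pos (hmem b hb)]
    have hp : (⟨a, hmem a ha⟩ : ↥L) * ⟨b, hmem b hb⟩ ∈ F' := by
      have : (⟨a, hmem a ha⟩ : ↥L) * ⟨b, hmem b hb⟩ = ⟨a * b, hmem _ hab⟩ := rfl
      rw [this]
      exact hmem' _ hab
    exact hmul ⟨a, hmem a ha⟩ (hmem' a ha) ⟨b, hmem b hb⟩ (hmem' b hb) hp

end Implications

/-- For a group `G` and a class `C` of groups the following are equivalent: (1) `G` is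
approximable by `C`; (2) `G` embeds into an ultraproduct of members of `C`; (3) `G`
satisfies every universal sentence true in all members of `C`; (4) every finitely
generated subgroup of `G` is approximable by `C`. -/
theorem approximable_tfae (G : Type u) [Group G] (C : GrpCat.{u} → Prop) :
    List.TFAE
      [Approximable G C,
       ∃ (I : Type u) (𝒰 : Ultrafilter I) (H : I → GrpCat.{u}),
         (∀ i, C (H i)) ∧
           ∃ f : G →* UProd 𝒰 fun i => ↥(H i), Function.Injective f,
       ∀ φ : GroupLang.Sentence, φ.IsUniversal →
         (∀ H : GrpCat.{u}, C H → ↥H ⊨ φ) → G ⊨ φ,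
       ∀ L : Subgroup G, L.FG → Approximable ↥L C] := by
  tfae_have 1 → 2 := one_to_two
  tfae_have 2 → 3 := two_to_three
  tfae_have 3 → 1 := three_to_one
  tfae_have 1 → 4 := one_to_four
  tfae_have 4 → 1 := four_to_one
  tfae_finish
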